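/- For every k ≥ 1, Σ_i γ(k,i)·(−1)^i = (−1)^k · (k+1)! · k! / 2^k; that is, the value of the polynomial γ_k(x) = Σ_i γ(k,i)x^i at x = −1 equals (−1)^k times the product of the first k positive triangular numbers. -/
import Mathlib


/-- For an integer `m`, the binomial coefficient `C(m, 2) = m(m−1)/2`. -/
def c2 (m : ℤ) : ℤ := m * (m - 1) / 2

/-- The coefficients `γ(k, i)`; note `gam 0 i = δ_{i,0}` and `gam k i = 0` for `i < 0`. -/
def gam : ℕ → ℤ → ℤ
  | 0, i => if i = 0 then 1 else 0
  | k + 1, i =>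
      c2 (i - (k : ℤ) - 1) * gam k (i - 1) +
        (i - 1) * (i - (k : ℤ) - 2) * gam k (i - 2) +
        c2 (i - 1) * gam k (i - 3)

lemma c2_two_mul (m : ℤ) : 2 * c2 m = m * (m - 1) := by
  obtain ⟨r, hr⟩ := Int.even_mul_succ_self (m - 1)
  have hm : m * (m - 1) = 2 * r := by linear_combination hr
  unfold c2
  rw [hm]
  omega

lemma gam_neg : ∀ (k : ℕ) (i : ℤ), i < 0 → gam k i = 0
  | 0, i, h => by simp [gam]; omega
  | k+1, i, h => by
    simp only [gam]
    rw [gam_neg k (i-1) (by omega), gam_neg k (i-2) (by omega), gam_neg k (i-3) (by omega)]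
    ring

lemma gam_big : ∀ (k : ℕ) (i : ℤ), 3 * (k : ℤ) < i → gam k i = 0
  | 0, i, h => by simp only [gam]; rw [if_neg]; omega
  | k+1, i, h => by
    have h' : 3 * ((k:ℤ)+1) < i := by push_cast at h; linarith
    simp only [gam]
    rw [gam_big k (i-1) (by omega), gam_big k (i-2) (by omega), gam_big k (i-3) (by omega)]
    ring

lemma shift_sum (k : ℕ) : ∀ (d : ℕ) (F : ℤ → ℤ),
    (∑ i ∈ Finset.range (3*k+1+d), F (i:ℤ) * gam k ((i:ℤ) - d) * (-1)^i)
      = (-1)^d * ∑ j ∈ Finset.range (3*k+1), F ((j:ℤ) + d) * gam k (j:ℤ) * (-1)^j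
  | 0, F => by simp
  | d+1, F => by
    have step : (∑ i ∈ Finset.range (3*k+1+(d+1)), F (i:ℤ) * gam k ((i:ℤ) - (d+1:ℕ)) * (-1)^i)
        = ∑ i ∈ Finset.range (3*k+1+d), -((fun x => F (x+1)) (i:ℤ) * gam k ((i:ℤ) - d) * (-1)^i) := by
      rw [show 3*k+1+(d+1) = (3*k+1+d)+1 from rfl, Finset.sum_range_succ']
      have h0 : F ((0:ℕ):ℤ) * gam k (((0:ℕ):ℤ) - ((d+1:ℕ):ℤ)) * (-1)^(0:ℕ) = 0 := by
        rw [gam_neg k _ (by push_cast; omega)]; ring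
      rw [h0, add_zero]
      refine Finset.sum_congr rfl fun i _ => ?_
      have harg : (((i+1:ℕ)):ℤ) - ((d+1:ℕ):ℤ) = (i:ℤ) - (d:ℤ) := by push_cast; ring
      rw [harg]
      push_cast
      ring
    rw [step, Finset.sum_neg_distrib, shift_sum k d (fun x => F (x+1))]
    have : ∀ j ∈ Finset.range (3*k+1),
        (fun x => F (x+1)) ((j:ℤ) + (d:ℕ)) * gam k (j:ℤ) * (-1)^j
          = F ((j:ℤ) + ((d+1:ℕ):ℤ)) * gam k (j:ℤ) * (-1)^j := by
      intro j _
      have : (j:ℤ) + (d:ℕ) + 1 = (j:ℤ) + ((d+1:ℕ):ℤ) := by push_cast; ring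
      simp only []
      rw [this]
    rw [Finset.sum_congr rfl this]
    push_cast
    ring

lemma truncate_sum (k d m : ℕ) (h : 3*k+1+d ≤ m) (F : ℤ → ℤ) :
    (∑ i ∈ Finset.range m, F (i:ℤ) * gam k ((i:ℤ) - d) * (-1)^i)
      = ∑ i ∈ Finset.range (3*k+1+d), F (i:ℤ) * gam k ((i:ℤ) - d) * (-1)^i := by
  refine (Finset.sum_subset (Finset.range_subset_range.2 h) fun x hx hx' => ?_).symm
  simp only [Finset.mem_range, not_lt] at hx'
  rw [gam_big k _ (by omega)]
  ring

lemma coeff_eq (k j : ℤ) :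
    -c2 (j - k) + (j + 1) * (j - k) + -c2 (j + 2) = -c2 (k + 2) := by
  have h1 := c2_two_mul (j - k)
  have h2 := c2_two_mul (j + 2)
  have h3 := c2_two_mul (k + 2)
  have : 2 * (-c2 (j - k) + (j + 1) * (j - k) + -c2 (j + 2)) = 2 * (-c2 (k + 2)) := by
    linear_combination -h1 - h2 + h3
  omega

lemma key_rec (k : ℕ) :
    (∑ i ∈ Finset.range (3*(k+1)+1), gam (k+1) (i:ℤ) * (-1)^i)
      = -c2 ((k:ℤ) + 2) * ∑ j ∈ Finset.range (3*k+1), gam k (j:ℤ) * (-1)^j := by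
  have expand : (∑ i ∈ Finset.range (3*(k+1)+1), gam (k+1) (i:ℤ) * (-1)^i)
      = (∑ i ∈ Finset.range (3*(k+1)+1), c2 ((i:ℤ) - k - 1) * gam k ((i:ℤ) - 1) * (-1)^i)
      + (∑ i ∈ Finset.range (3*(k+1)+1), ((i:ℤ) - 1) * ((i:ℤ) - k - 2) * gam k ((i:ℤ) - 2) * (-1)^i)
      + (∑ i ∈ Finset.range (3*(k+1)+1), c2 ((i:ℤ) - 1) * gam k ((i:ℤ) - 3) * (-1)^i) := by
    rw [← Finset.sum_add_distrib, ← Finset.sum_add_distrib]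
    refine Finset.sum_congr rfl fun i _ => ?_
    simp only [gam]
    ring
  rw [expand]
  have e1 : (∑ i ∈ Finset.range (3*(k+1)+1), c2 ((i:ℤ) - k - 1) * gam k ((i:ℤ) - 1) * (-1)^i)
      = (-1)^1 * ∑ j ∈ Finset.range (3*k+1), c2 ((j:ℤ) + 1 - k - 1) * gam k (j:ℤ) * (-1)^j := by
    have t := truncate_sum k 1 (3*(k+1)+1) (by omega) (fun x => c2 (x - k - 1))
    have s := shift_sum k 1 (fun x => c2 (x - k - 1))
    simp only [Nat.cast_one] at t s ⊢
    rw [t, s]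
  have e2 : (∑ i ∈ Finset.range (3*(k+1)+1), ((i:ℤ) - 1) * ((i:ℤ) - k - 2) * gam k ((i:ℤ) - 2) * (-1)^i)
      = (-1)^2 * ∑ j ∈ Finset.range (3*k+1), ((j:ℤ) + 2 - 1) * ((j:ℤ) + 2 - k - 2) * gam k (j:ℤ) * (-1)^j := by
    have t := truncate_sum k 2 (3*(k+1)+1) (by omega) (fun x => (x - 1) * (x - k - 2))
    have s := shift_sum k 2 (fun x => (x - 1) * (x - k - 2))
    simp only [Nat.cast_ofNat] at t s ⊢
    rw [t, s]
  have e3 : (∑ i ∈ Finset.range (3*(k+1)+1), c2 ((i:ℤ) - 1) * gam k ((i:ℤ) - 3) * (-1)^i)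
      = (-1)^3 * ∑ j ∈ Finset.range (3*k+1), c2 ((j:ℤ) + 3 - 1) * gam k (j:ℤ) * (-1)^j := by
    have t := truncate_sum k 3 (3*(k+1)+1) (by omega) (fun x => c2 (x - 1))
    have s := shift_sum k 3 (fun x => c2 (x - 1))
    simp only [Nat.cast_ofNat] at t s ⊢
    rw [t, s]
  rw [e1, e2, e3, Finset.mul_sum, Finset.mul_sum, Finset.mul_sum, Finset.mul_sum,
    ← Finset.sum_add_distrib, ← Finset.sum_add_distrib]
  refine Finset.sum_congr rfl fun j _ => ?_
  rw [show (j:ℤ)+1-(k:ℤ)-1 = (j:ℤ)-(k:ℤ) by ring, show (j:ℤ)+3-1 = (j:ℤ)+2 by ring]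
  linear_combination (gam k (j:ℤ) * (-1)^j) * coeff_eq (k:ℤ) (j:ℤ)

lemma int_sum_eq (k : ℕ) (hk : 1 ≤ k) :
    ((∑ i ∈ Finset.range (3*k+1), gam k (i:ℤ) * (-1)^i : ℤ) : ℚ)
      = (-1)^k * ((Nat.factorial (k+1) : ℚ) * (Nat.factorial k : ℚ)) / 2^k := by
  induction k with
  | zero => omega
  | succ n ih =>
    by_cases hn : n = 0
    · subst hn
      norm_num [Finset.sum_range_succ, gam, c2, Nat.factorial]
    · have hn1 : 1 ≤ n := by omega
      rw [key_rec n, Int.cast_mul, ih hn1]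
      have h2 : (2:ℚ) * ((c2 ((n:ℤ)+2) : ℤ) : ℚ) = ((n:ℚ)+2)*((n:ℚ)+1) := by
        have h := c2_two_mul ((n:ℤ)+2)
        rw [show ((n:ℤ)+2) - 1 = (n:ℤ)+1 by ring] at h
        exact_mod_cast h
      have hc : ((c2 ((n:ℤ)+2) : ℤ) : ℚ) = ((n:ℚ)+2)*((n:ℚ)+1)/2 := by linarith
      rw [Nat.factorial_succ (n+1), Nat.factorial_succ n]
      push_cast
      rw [hc]
      field_simp
      ring

/-- The value of `γ_k(x) = Σ_i γ(k,i) xⁱ` at `x = −1` (the coefficients `γ(k,i)`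
vanish for `i > 3k`, so the sum below captures all of them). -/
theorem gammaPoly_at_neg_one (k : ℕ) (hk : 1 ≤ k) :
    (∑ i ∈ Finset.range (3 * k + 1), (gam k (i : ℤ) : ℚ) * (-1) ^ i) =
      (-1) ^ k * ((Nat.factorial (k + 1) : ℚ) * (Nat.factorial k : ℚ)) / 2 ^ k := by
  rw [← int_sum_eq k hk]
  push_cast
  rfl
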